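/- There exist constants C₂ > C₁ > 0 such that for all H ∈ ℕ with H ≥ 1, C₁ H^{(log λ₁)/log φ} ≤ V(H) ≤ C₂ H^{(log λ₁)/log φ}, where φ = (1+√5)/2 and λ₁ is the greatest root of x^3 − 2x^2 − 2x + 2. -/

import Mathlib

/-- Number of representations of `n` as a sum of distinct Fibonacci numbers. -/
noncomputable def R (n : ℕ) : ℕ :=
  Nat.card {s : Finset ℕ // (∀ x ∈ s, 0 < x ∧ ∃ m, Nat.fib m = x) ∧ ∑ x ∈ s, x = n}

noncomputable def A (H : ℕ) : ℕ := ∑ n ∈ Finset.range (H + 1), R n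

noncomputable def V (H : ℕ) : ℕ := ∑ n ∈ Finset.range (H + 1), (R n) ^ 2
namespace VOM

/-- the distinct positive Fibonacci values 1,2,3,5,8,... -/
def g (i : ℕ) : ℕ := Nat.fib (i + 2)

lemma g_pos (i : ℕ) : 0 < g i := by
  have : 0 < i + 2 := by omega
  simpa [g] using Nat.fib_pos.2 this

lemma g_strictMono : StrictMono g := by
  apply strictMono_nat_of_lt_succ
  intro n
  exact Nat.fib_lt_fib_succ (by omega)

def sub (m : ℕ) : Finset (Finset ℕ) := (Finset.range m).powerset

lemma not_mem_of_mem_sub {m : ℕ} {s : Finset ℕ} (h : s ∈ sub m) : m ∉ s := by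
  intro hm
  have := Finset.mem_powerset.1 h hm
  simp at this

lemma sub_succ (m : ℕ) : sub (m + 1) = sub m ∪ (sub m).image (insert m) := by
  rw [sub, Finset.range_add_one, Finset.powerset_insert, sub]

lemma sum_sub_succ (m : ℕ) (F : Finset ℕ → ℕ) :
    ∑ s ∈ sub (m + 1), F s = ∑ s ∈ sub m, F s + ∑ s ∈ sub m, F (insert m s) := by
  rw [sub_succ, Finset.sum_union, Finset.sum_image]
  · intro x hx y hy hxy
    have hx' := not_mem_of_mem_sub hx
    have hy' := not_mem_of_mem_sub hy
    have : (insert m x).erase m = (insert m y).erase m := by rw [hxy]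
    rwa [Finset.erase_insert hx', Finset.erase_insert hy'] at this
  · rw [Finset.disjoint_left]
    intro s hs hs'
    obtain ⟨t, _, rfl⟩ := Finset.mem_image.1 hs'
    exact not_mem_of_mem_sub hs (Finset.mem_insert_self m t)

def ee (m : ℕ) (v : ℤ) : ℕ := ∑ b ∈ sub m, if v = ∑ i ∈ b, (g i : ℤ) then 1 else 0

def NN (m : ℕ) (t : ℤ) : ℕ := ∑ a ∈ sub m, ee m ((∑ i ∈ a, (g i : ℤ)) - t)

lemma NN_expand (m : ℕ) (t : ℤ) :
    NN m t = ∑ a ∈ sub m, ee m ((∑ i ∈ a, (g i : ℤ)) - t) := rfl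

lemma ee_succ (m : ℕ) (v : ℤ) : ee (m + 1) v = ee m v + ee m (v - g m) := by
  rw [ee, sum_sub_succ]
  congr 1
  refine Finset.sum_congr rfl fun b hb => ?_
  rw [Finset.sum_insert (not_mem_of_mem_sub hb)]
  exact if_congr (by constructor <;> intro h <;> linarith) rfl rfl

lemma NN_rec (m : ℕ) (t : ℤ) :
    NN (m + 1) t = 2 * NN m t + NN m (t - g m) + NN m (t + g m) := by
  rw [NN_expand, sum_sub_succ]
  have h1 : ∀ a ∈ sub m, ee (m + 1) ((∑ i ∈ a, (g i : ℤ)) - t)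
      = ee m ((∑ i ∈ a, (g i : ℤ)) - t) + ee m ((∑ i ∈ a, (g i : ℤ)) - (t + g m)) := by
    intro a _
    rw [ee_succ]
    congr 2
    ring
  have h2 : ∀ a ∈ sub m, ee (m + 1) ((∑ i ∈ insert m a, (g i : ℤ)) - t)
      = ee m ((∑ i ∈ a, (g i : ℤ)) - (t - g m)) + ee m ((∑ i ∈ a, (g i : ℤ)) - t) := by
    intro a ha
    rw [Finset.sum_insert (not_mem_of_mem_sub ha), ee_succ]
    congr 2 <;> ring
  rw [Finset.sum_congr rfl h1, Finset.sum_congr rfl h2, Finset.sum_add_distrib,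
    Finset.sum_add_distrib, ← NN_expand, ← NN_expand, ← NN_expand]
  ring

lemma NN_symm (m : ℕ) (t : ℤ) : NN m (-t) = NN m t := by
  rw [NN_expand, NN_expand]
  unfold ee
  rw [Finset.sum_comm]
  refine Finset.sum_congr rfl fun b _ => Finset.sum_congr rfl fun a _ => ?_
  exact if_congr (by constructor <;> intro h <;> linarith) rfl rfl


lemma sum_g (m : ℕ) : (∑ i ∈ Finset.range m, g i) + 2 = Nat.fib (m + 3) := by
  induction m with
  | zero => decide
  | succ m ih =>
    rw [Finset.sum_range_succ]
    have h1 : Nat.fib (m + 1 + 3) = Nat.fib (m + 2) + Nat.fib (m + 3) := Nat.fib_add_two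
    have h2 : g m = Nat.fib (m + 2) := rfl
    omega

lemma sum_le_of_mem_sub {m : ℕ} {a : Finset ℕ} (h : a ∈ sub m) :
    (∑ i ∈ a, g i) + 2 ≤ Nat.fib (m + 3) := by
  rw [← sum_g m]
  have : ∑ i ∈ a, g i ≤ ∑ i ∈ Finset.range m, g i :=
    Finset.sum_le_sum_of_subset (Finset.mem_powerset.1 h)
  omega

lemma sumZ_le_of_mem_sub {m : ℕ} {a : Finset ℕ} (h : a ∈ sub m) :
    (∑ i ∈ a, (g i : ℤ)) + 2 ≤ Nat.fib (m + 3) := by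
  have := sum_le_of_mem_sub h
  have hcast : (∑ i ∈ a, (g i : ℤ)) = ((∑ i ∈ a, g i : ℕ) : ℤ) := by push_cast; rfl
  rw [hcast]
  exact_mod_cast this

lemma sumZ_nonneg {a : Finset ℕ} : (0 : ℤ) ≤ ∑ i ∈ a, (g i : ℤ) :=
  Finset.sum_nonneg fun i _ => by positivity

lemma ee_neg {m : ℕ} {v : ℤ} (hv : v < 0) : ee m v = 0 := by
  rw [ee]
  refine Finset.sum_eq_zero fun b _ => ?_
  rw [if_neg]
  intro h
  have := sumZ_nonneg (a := b)
  omega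

lemma NN_vanish {m : ℕ} {t : ℤ} (ht : (Nat.fib (m + 3) : ℤ) - 2 < t) : NN m t = 0 := by
  rw [NN_expand]
  refine Finset.sum_eq_zero fun a ha => ?_
  refine ee_neg ?_
  have := sumZ_le_of_mem_sub ha
  omega

/-- `NN (j+1) (fib (j+3)) = NN j (fib (j+1))` -/
lemma NN_shift (j : ℕ) : NN (j + 1) (Nat.fib (j + 3)) = NN j (Nat.fib (j + 1)) := by
  rw [NN_rec]
  have hg : (g j : ℤ) = (Nat.fib (j + 2) : ℤ) := rfl
  have hf : Nat.fib (j + 3) = Nat.fib (j + 1) + Nat.fib (j + 2) := Nat.fib_add_two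
  have h1 : NN j (Nat.fib (j + 3)) = 0 := NN_vanish (by push_cast; omega)
  have h2 : NN j ((Nat.fib (j + 3) : ℤ) + g j) = 0 := by
    refine NN_vanish ?_
    rw [hg]
    have : 0 < Nat.fib (j + 2) := Nat.fib_pos.2 (by omega)
    push_cast
    omega
  have h3 : ((Nat.fib (j + 3) : ℤ)) - g j = (Nat.fib (j + 1) : ℤ) := by
    rw [hg]; push_cast [hf]; ring
  rw [h1, h3, h2]
  omega

/-- A-recurrence: `NN (k+2) 0 = 2 NN (k+1) 0 + 2 NN k (fib (k+1))` -/
lemma AA_rec (k : ℕ) :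
    NN (k + 2) 0 = 2 * NN (k + 1) 0 + 2 * NN k (Nat.fib (k + 1)) := by
  rw [NN_rec]
  have hg : (g (k + 1) : ℤ) = (Nat.fib (k + 3) : ℤ) := rfl
  have h1 : NN (k + 1) ((0 : ℤ) - g (k + 1)) = NN (k + 1) (Nat.fib (k + 3)) := by
    rw [show (0 : ℤ) - g (k + 1) = -(Nat.fib (k + 3) : ℤ) by rw [hg]; ring, NN_symm]
  have h2 : NN (k + 1) ((0 : ℤ) + g (k + 1)) = NN (k + 1) (Nat.fib (k + 3)) := by
    rw [show (0 : ℤ) + g (k + 1) = (Nat.fib (k + 3) : ℤ) by rw [hg]; ring]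
  rw [h1, h2, NN_shift]
  omega

/-- C-recurrence: `NN (k+2) (fib (k+3)) = NN (k+1) 0 + 2 NN k (fib (k+1))` -/
lemma CC_rec (k : ℕ) :
    NN (k + 2) (Nat.fib (k + 3)) = NN (k + 1) 0 + 2 * NN k (Nat.fib (k + 1)) := by
  rw [NN_rec]
  have hg : (g (k + 1) : ℤ) = (Nat.fib (k + 3) : ℤ) := rfl
  have h1 : NN (k + 1) ((Nat.fib (k + 3) : ℤ) - g (k + 1)) = NN (k + 1) 0 := by
    rw [show (Nat.fib (k + 3) : ℤ) - g (k + 1) = 0 by rw [hg]; ring]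
  have h2 : NN (k + 1) ((Nat.fib (k + 3) : ℤ) + g (k + 1)) = 0 := by
    refine NN_vanish ?_
    rw [hg]
    have hf : Nat.fib (k + 4) = Nat.fib (k + 2) + Nat.fib (k + 3) := Nat.fib_add_two
    have hm : Nat.fib (k + 2) <= Nat.fib (k + 3) := Nat.fib_le_fib_succ
    push_cast [hf]
    omega
  have h3 : NN (k + 1) (Nat.fib (k + 3)) = NN k (Nat.fib (k + 1)) := NN_shift k
  rw [h1, h2, h3]
  omega

-- base values
lemma NN_1_0 : NN 1 0 = 2 := by decide
lemma NN_2_0 : NN 2 0 = 4 := by decide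
lemma NN_1_C : NN 1 (1 : ℤ) = 1 := by decide
lemma NN_2_C : NN 2 (2 : ℤ) = 2 := by decide


def Rf (m n : ℕ) : ℕ := ((sub m).filter (fun s => ∑ i ∈ s, g i = n)).card

lemma ee_eq_Rf (m n : ℕ) : ee m (n : ℤ) = Rf m n := by
  rw [ee, Rf, Finset.card_filter]
  refine Finset.sum_congr rfl fun b _ => ?_
  refine if_congr ?_ rfl rfl
  have hcast : (∑ i ∈ b, (g i : ℤ)) = ((∑ i ∈ b, g i : ℕ) : ℤ) := by push_cast; rfl
  rw [hcast]
  constructor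
  · intro h; exact_mod_cast h.symm
  · intro h; exact_mod_cast h.symm

lemma fib_m3_ge_two (m : ℕ) : 2 ≤ Nat.fib (m + 3) := by
  have : Nat.fib 3 ≤ Nat.fib (m + 3) := Nat.fib_mono (by omega)
  rw [show Nat.fib 3 = 2 by decide] at this; exact this

lemma NN_zero_eq (m : ℕ) :
    NN m 0 = ∑ n ∈ Finset.range (Nat.fib (m + 3) - 1), (Rf m n) ^ 2 := by
  have h1 : NN m 0 = ∑ a ∈ sub m, Rf m (∑ i ∈ a, g i) := by
    rw [NN_expand]
    refine Finset.sum_congr rfl fun a _ => ?_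
    rw [sub_zero]
    have hcast : (∑ i ∈ a, (g i : ℤ)) = ((∑ i ∈ a, g i : ℕ) : ℤ) := by push_cast; rfl
    rw [hcast, ee_eq_Rf]
  rw [h1]
  have hmaps : ∀ a ∈ sub m, (∑ i ∈ a, g i) ∈ Finset.range (Nat.fib (m + 3) - 1) := by
    intro a ha
    have := sum_le_of_mem_sub ha
    have := fib_m3_ge_two m
    rw [Finset.mem_range]
    omega
  rw [← Finset.sum_fiberwise_of_maps_to hmaps (fun a => Rf m (∑ i ∈ a, g i))]
  refine Finset.sum_congr rfl fun n _ => ?_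
  have : ∀ a ∈ (sub m).filter (fun a => (∑ i ∈ a, g i) = n),
      Rf m (∑ i ∈ a, g i) = Rf m n := by
    intro a ha
    rw [(Finset.mem_filter.1 ha).2]
  rw [Finset.sum_congr rfl this, Finset.sum_const, smul_eq_mul]
  rw [show ((sub m).filter (fun a => (∑ i ∈ a, g i) = n)).card = Rf m n from rfl]
  ring

lemma exists_g_eq {x : ℕ} (hx : 0 < x) (hfib : ∃ mm, Nat.fib mm = x) : ∃ i, g i = x := by
  obtain ⟨mm, rfl⟩ := hfib
  match mm with
  | 0 => simp at hx
  | 1 => exact ⟨0, by decide⟩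
  | (i + 2) => exact ⟨i, rfl⟩

lemma image_filter_eq {m n : ℕ} (s : Finset ℕ)
    (h1 : ∀ x ∈ s, 0 < x ∧ ∃ mm, Nat.fib mm = x)
    (h2 : ∑ x ∈ s, x = n) (hn : n < Nat.fib (m + 2)) :
    ((Finset.range m).filter (fun i => g i ∈ s)).image g = s := by
  ext x
  simp only [Finset.mem_image, Finset.mem_filter, Finset.mem_range]
  constructor
  · rintro ⟨i, ⟨_, hgi⟩, rfl⟩
    exact hgi
  · intro hx
    obtain ⟨hpos, hfib⟩ := h1 x hx
    obtain ⟨i, rfl⟩ := exists_g_eq hpos hfib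
    have hle : g i ≤ n := h2 ▸ Finset.single_le_sum (f := fun x => x) (fun y _ => Nat.zero_le y) hx
    have him : i < m := by
      have : g i < g m := lt_of_le_of_lt hle hn
      exact g_strictMono.lt_iff_lt.1 this
    exact ⟨i, ⟨him, hx⟩, rfl⟩

lemma R_eq_Rf {m n : ℕ} (h : n < Nat.fib (m + 2)) : R n = Rf m n := by
  rw [R, Rf, ← Fintype.card_coe, ← Nat.card_eq_fintype_card]
  refine Nat.card_congr ?_
  refine
    { toFun := fun s => ⟨(Finset.range m).filter (fun i => g i ∈ s.1), ?_⟩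
      invFun := fun t => ⟨t.1.image g, ?_, ?_⟩
      left_inv := ?_
      right_inv := ?_ }
  case refine_1 =>
    obtain ⟨s, hs1, hs2⟩ := s
    show Finset.filter (fun i => g i ∈ s) (Finset.range m)
        ∈ Finset.filter (fun s => ∑ i ∈ s, g i = n) (sub m)
    rw [Finset.mem_filter]
    refine ⟨Finset.mem_powerset.2 (Finset.filter_subset _ _), ?_⟩
    have himg := image_filter_eq s hs1 hs2 h
    have hinj : ∀ x ∈ (Finset.range m).filter (fun i => g i ∈ s), ∀ y ∈
        (Finset.range m).filter (fun i => g i ∈ s), g x = g y → x = y :=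
      fun x _ y _ hxy => g_strictMono.injective hxy
    calc ∑ i ∈ (Finset.range m).filter (fun i => g i ∈ s), g i
        = ∑ x ∈ ((Finset.range m).filter (fun i => g i ∈ s)).image g, x :=
          (Finset.sum_image (f := fun x => x) hinj).symm
      _ = ∑ x ∈ s, x := by rw [himg]
      _ = n := hs2
  case refine_2 =>
    intro x hx
    obtain ⟨i, _, rfl⟩ := Finset.mem_image.1 hx
    exact ⟨g_pos i, ⟨i + 2, rfl⟩⟩
  case refine_3 =>
    obtain ⟨t, ht⟩ := t
    rw [Finset.mem_filter] at ht
    show ∑ x ∈ Finset.image g t, x = n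
    have hinj : ∀ x ∈ t, ∀ y ∈ t, g x = g y → x = y :=
      fun x _ y _ hxy => g_strictMono.injective hxy
    rw [Finset.sum_image (f := fun x => x) hinj]
    exact ht.2
  case refine_4 =>
    rintro ⟨s, hs1, hs2⟩
    apply Subtype.ext
    show Finset.image g (Finset.filter (fun i => g i ∈ s) (Finset.range m)) = s
    exact image_filter_eq s hs1 hs2 h
  case refine_5 =>
    rintro ⟨t, ht⟩
    rw [Finset.mem_filter] at ht
    apply Subtype.ext
    show Finset.filter (fun i => g i ∈ Finset.image g t) (Finset.range m) = t
    ext i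
    simp only [Finset.mem_filter, Finset.mem_range, Finset.mem_image]
    constructor
    · rintro ⟨_, j, hj, hgj⟩
      rwa [← g_strictMono.injective hgj]
    · intro hi
      have him : i < m := Finset.mem_range.1 (Finset.mem_powerset.1 ht.1 hi)
      exact ⟨him, i, hi, rfl⟩


lemma Rf_mono {m m' n : ℕ} (h : m ≤ m') : Rf m n ≤ Rf m' n := by
  apply Finset.card_le_card
  apply Finset.filter_subset_filter
  exact Finset.powerset_mono.2 (Finset.range_subset_range.2 h)

lemma add_one_le_fib (n : ℕ) : n + 1 ≤ Nat.fib (n + 2) := by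
  induction n using Nat.twoStepInduction with
  | zero => decide
  | one => decide
  | more n ih1 ih2 =>
    have : Nat.fib (n + 4) = Nat.fib (n + 2) + Nat.fib (n + 3) := Nat.fib_add_two
    have e1 : Nat.fib (n + 1 + 2) = Nat.fib (n + 3) := rfl
    have e2 : Nat.fib (n + 2 + 2) = Nat.fib (n + 4) := rfl
    omega

lemma Rf_le_R (m n : ℕ) : Rf m n ≤ R n := by
  have hM : n < Nat.fib (max m (n + 1) + 2) := by
    have h1 : n + 2 ≤ Nat.fib (n + 1 + 2) := add_one_le_fib (n + 1)
    have h2 : Nat.fib (n + 1 + 2) ≤ Nat.fib (max m (n + 1) + 2) :=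
      Nat.fib_mono (by omega)
    omega
  rw [R_eq_Rf hM]
  exact Rf_mono (le_max_left _ _)

lemma V_eq {H m : ℕ} (h : H < Nat.fib (m + 2)) :
    V H = ∑ n ∈ Finset.range (H + 1), (Rf m n) ^ 2 := by
  rw [V]
  refine Finset.sum_congr rfl fun n hn => ?_
  have hn' := Finset.mem_range.1 hn
  rw [R_eq_Rf (show n < Nat.fib (m + 2) by omega)]

lemma V_le_NN {H k : ℕ} (h : H < Nat.fib (k + 3)) : V H ≤ NN (k + 1) 0 := by
  rw [V_eq h, NN_zero_eq]
  apply Finset.sum_le_sum_of_subset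
  apply Finset.range_subset_range.2
  have e : Nat.fib (k + 1 + 3) = Nat.fib (k + 4) := rfl
  have h2 : 2 ≤ Nat.fib (k + 1 + 3) := fib_m3_ge_two (k + 1)
  have h3 : Nat.fib (k + 4) = Nat.fib (k + 2) + Nat.fib (k + 3) := Nat.fib_add_two
  have h4 : 0 < Nat.fib (k + 2) := Nat.fib_pos.2 (by omega)
  omega

lemma V_mono : Monotone V := by
  intro a b hab
  apply Finset.sum_le_sum_of_subset
  exact Finset.range_subset_range.2 (by omega)

lemma NN_le_V (m : ℕ) : NN m 0 ≤ V (Nat.fib (m + 3) - 2) := by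
  rw [NN_zero_eq]
  have h2 : 2 ≤ Nat.fib (m + 3) := fib_m3_ge_two m
  have hr : Nat.fib (m + 3) - 1 = (Nat.fib (m + 3) - 2) + 1 := by omega
  rw [hr, V]
  refine Finset.sum_le_sum fun n _ => ?_
  exact Nat.pow_le_pow_left (Rf_le_R m n) 2

lemma R_zero : R 0 = 1 := by
  rw [R_eq_Rf (show 0 < Nat.fib (1 + 2) by decide)]
  decide

lemma one_le_V (H : ℕ) : 1 ≤ V H := by
  have h0 : (0 : ℕ) ∈ Finset.range (H + 1) := Finset.mem_range.2 (by omega)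
  calc 1 = R 0 ^ 2 := by rw [R_zero]; norm_num
    _ ≤ V H := Finset.single_le_sum (f := fun n => R n ^ 2) (fun i _ => Nat.zero_le _) h0

lemma exists_k {H : ℕ} (h : 1 ≤ H) : ∃ k, Nat.fib (k + 2) ≤ H ∧ H < Nat.fib (k + 3) := by
  induction H with
  | zero => omega
  | succ H ih =>
    rcases Nat.lt_or_ge 1 (H + 1) with h1 | h1
    · obtain ⟨k, hk1, hk2⟩ := ih (by omega)
      by_cases hc : H + 1 < Nat.fib (k + 3)
      · exact ⟨k, by omega, hc⟩
      · refine ⟨k + 1, ?_, ?_⟩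
        · show Nat.fib (k + 3) ≤ H + 1
          omega
        · show H + 1 < Nat.fib (k + 4)
          have : Nat.fib (k + 3) < Nat.fib (k + 4) := Nat.fib_lt_fib_succ (by omega)
          omega
    · have hH : H = 0 := by omega
      subst hH
      exact ⟨0, by decide, by decide⟩

/-- The key two-sided growth estimate for `NN k 0` and `NN k (fib (k+1))`. -/
lemma NN_bounds (l y : ℝ) (hl2 : 2 < l) (hl26 : l < 2.6)
    (hy04 : 0.4 ≤ y) (hy13 : y ≤ 1.3)
    (hK1 : l ^ 2 = 2 * l + 2 * y) (hK2 : y * l ^ 2 = l + 2 * y) :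
    ∀ k, 1 ≤ k →
      ((1 : ℝ) / 20 * l ^ k ≤ (NN k 0 : ℝ) ∧ (NN k 0 : ℝ) ≤ 10 * l ^ k) ∧
      ((1 : ℝ) / 20 * y * l ^ k ≤ (NN k (Nat.fib (k + 1)) : ℝ) ∧
        (NN k (Nat.fib (k + 1)) : ℝ) ≤ 10 * y * l ^ k) := by
  intro k
  induction k using Nat.strong_induction_on with
  | _ k IH =>
    intro hk
    match k, hk with
    | 1, _ => 
      have hf : ((Nat.fib (1 + 1) : ℕ) : ℤ) = 1 := by decide
      rw [NN_1_0, hf, NN_1_C]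
      push_cast
      constructor
      · constructor <;> nlinarith
      · constructor <;> nlinarith
    | 2, _ =>
      have hf : ((Nat.fib (2 + 1) : ℕ) : ℤ) = 2 := by decide
      rw [NN_2_0, hf, NN_2_C]
      push_cast
      constructor
      · constructor <;> nlinarith
      · constructor <;> nlinarith
    | (j + 3), _ =>
      have IH1 := IH (j + 2) (by omega) (by omega)
      have IH0 := IH (j + 1) (by omega) (by omega)
      have hA : (NN (j + 3) 0 : ℝ)
          = 2 * (NN (j + 2) 0 : ℝ) + 2 * (NN (j + 1) (Nat.fib (j + 2)) : ℝ) := by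
        have := AA_rec (j + 1)
        push_cast [this]
        ring
      have hC : (NN (j + 3) (Nat.fib (j + 4)) : ℝ)
          = (NN (j + 2) 0 : ℝ) + 2 * (NN (j + 1) (Nat.fib (j + 2)) : ℝ) := by
        have := CC_rec (j + 1)
        push_cast [this]
        ring
      obtain ⟨⟨hA1l, hA1u⟩, -⟩ := IH1
      obtain ⟨-, ⟨hC0l, hC0u⟩⟩ := IH0
      have hlpos : (0 : ℝ) < l := by linarith
      have hpowpos : (0 : ℝ) < l ^ (j + 1) := pow_pos hlpos _
      have e1 : l ^ (j + 3) = l ^ (j + 1) * l ^ 2 := by ring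
      have e2 : l ^ (j + 2) = l ^ (j + 1) * l := by ring
      refine ⟨⟨?_, ?_⟩, ⟨?_, ?_⟩⟩
      · rw [hA]
        have : (1 : ℝ) / 20 * l ^ (j + 3)
            = 2 * ((1 : ℝ) / 20 * l ^ (j + 2)) + 2 * ((1 : ℝ) / 20 * y * l ^ (j + 1)) := by
          rw [e1, hK1, e2]; ring
        linarith
      · rw [hA]
        have : (10 : ℝ) * l ^ (j + 3)
            = 2 * ((10 : ℝ) * l ^ (j + 2)) + 2 * ((10 : ℝ) * y * l ^ (j + 1)) := by
          rw [e1, hK1, e2]; ring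
        linarith
      · rw [show (j + 3) + 1 = j + 4 from rfl, hC]
        have : (1 : ℝ) / 20 * y * l ^ (j + 3)
            = (1 : ℝ) / 20 * l ^ (j + 2) + 2 * ((1 : ℝ) / 20 * y * l ^ (j + 1)) := by
          rw [e1, show l ^ (j+1) * l ^ 2 = l ^ (j+1) * (l^2) from rfl]
          have : y * (l ^ (j + 1) * l ^ 2) = l ^ (j + 1) * (y * l ^ 2) := by ring
          rw [show (1:ℝ)/20 * y * (l ^ (j+1) * l^2) = 1/20 * (l^(j+1) * (y * l^2)) by ring,
            hK2, e2]
          ring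
        linarith
      · rw [show (j + 3) + 1 = j + 4 from rfl, hC]
        have : (10 : ℝ) * y * l ^ (j + 3)
            = (10 : ℝ) * l ^ (j + 2) + 2 * ((10 : ℝ) * y * l ^ (j + 1)) := by
          rw [show (10:ℝ) * y * l ^ (j+3) = 10 * (l^(j+1) * (y * l^2)) by rw [e1]; ring,
            hK2, e2]
          ring
        linarith


lemma gold_pow_le_fib : ∀ m : ℕ, Real.goldenRatio ^ m ≤ (Nat.fib (m + 2) : ℝ) := by
  intro m
  induction m using Nat.twoStepInduction with
  | zero => simp
  | one =>
    have h2 : Nat.fib 3 = 2 := by decide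
    rw [show (1:ℕ) + 2 = 3 from rfl, h2]
    push_cast
    nlinarith [Real.goldenRatio_lt_two]
  | more m ih1 ih2 =>
    have hf : (Nat.fib (m + 2 + 2) : ℝ) = (Nat.fib (m + 2) : ℝ) + (Nat.fib (m + 1 + 2) : ℝ) := by
      have : Nat.fib (m + 4) = Nat.fib (m + 2) + Nat.fib (m + 3) := Nat.fib_add_two
      have e1 : Nat.fib (m + 2 + 2) = Nat.fib (m + 4) := rfl
      have e2 : Nat.fib (m + 1 + 2) = Nat.fib (m + 3) := rfl
      rw [e1, e2, this]
      push_cast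
      ring
    have hstep : Real.goldenRatio ^ (m + 2) = Real.goldenRatio ^ m + Real.goldenRatio ^ (m + 1) := by
      have : Real.goldenRatio ^ (m + 2) = Real.goldenRatio ^ m * Real.goldenRatio ^ 2 := by ring
      rw [this, Real.goldenRatio_sq]
      ring
    rw [hf, hstep]
    exact add_le_add ih1 ih2

lemma fib_le_gold_pow : ∀ m : ℕ, (Nat.fib (m + 2) : ℝ) ≤ Real.goldenRatio ^ (m + 1) := by
  intro m
  induction m using Nat.twoStepInduction with
  | zero =>
    simpa using le_of_lt Real.one_lt_goldenRatio
  | one =>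
    have h2 : Nat.fib 3 = 2 := by decide
    rw [show (1:ℕ) + 2 = 3 from rfl, h2, show (1:ℕ) + 1 = 2 from rfl, Real.goldenRatio_sq]
    push_cast
    nlinarith [Real.one_lt_goldenRatio]
  | more m ih1 ih2 =>
    have hf : (Nat.fib (m + 2 + 2) : ℝ) = (Nat.fib (m + 2) : ℝ) + (Nat.fib (m + 1 + 2) : ℝ) := by
      have : Nat.fib (m + 4) = Nat.fib (m + 2) + Nat.fib (m + 3) := Nat.fib_add_two
      have e1 : Nat.fib (m + 2 + 2) = Nat.fib (m + 4) := rfl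
      have e2 : Nat.fib (m + 1 + 2) = Nat.fib (m + 3) := rfl
      rw [e1, e2, this]
      push_cast
      ring
    have hstep : Real.goldenRatio ^ (m + 2 + 1) = Real.goldenRatio ^ (m + 1) + Real.goldenRatio ^ (m + 1 + 1) := by
      have : Real.goldenRatio ^ (m + 2 + 1) = Real.goldenRatio ^ (m + 1) * Real.goldenRatio ^ 2 := by ring
      rw [this, Real.goldenRatio_sq]
      ring
    rw [hf, hstep]
    exact add_le_add ih1 ih2


end VOM

open VOM

set_option maxHeartbeats 1000000

theorem V_order_of_magnitude (l : ℝ)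
    (hroot : l ^ 3 - 2 * l ^ 2 - 2 * l + 2 = 0)
    (hmax : ∀ x : ℝ, x ^ 3 - 2 * x ^ 2 - 2 * x + 2 = 0 → x ≤ l) :
    ∃ C₁ C₂ : ℝ, 0 < C₁ ∧ C₁ < C₂ ∧
      ∀ H : ℕ, 1 ≤ H →
        C₁ * (H : ℝ) ^ (Real.log l / Real.log ((1 + Real.sqrt 5) / 2)) ≤ (V H : ℝ) ∧
        (V H : ℝ) ≤ C₂ * (H : ℝ) ^ (Real.log l / Real.log ((1 + Real.sqrt 5) / 2)) := by
  classical
  -- basic bounds on l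
  have hl2 : 2 < l := by
    have hcont : Continuous fun x : ℝ => x ^ 3 - 2 * x ^ 2 - 2 * x + 2 := by continuity
    have hIcc : (0 : ℝ) ∈ Set.Icc ((fun x : ℝ => x ^ 3 - 2 * x ^ 2 - 2 * x + 2) 2)
        ((fun x : ℝ => x ^ 3 - 2 * x ^ 2 - 2 * x + 2) 3) := by
      constructor <;> norm_num
    obtain ⟨r, hr, hfr⟩ :=
      intermediate_value_Icc (by norm_num : (2:ℝ) ≤ 3) hcont.continuousOn hIcc
    have hrl := hmax r hfr
    have hne : r ≠ 2 := by
      intro h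
      rw [h] at hfr
      norm_num at hfr
    have h2r := hr.1
    rcases lt_or_eq_of_le h2r with h | h
    · linarith
    · exact absurd h.symm hne
  have hl26 : l < 2.6 := by
    by_contra hcon
    push_neg at hcon
    nlinarith [hroot, mul_nonneg (by linarith : (0:ℝ) ≤ l - 2.6)
      (by nlinarith : (0:ℝ) ≤ l ^ 2 + 0.6 * l - 0.44)]
  have hl0 : (0:ℝ) < l := by linarith
  have hden : (0:ℝ) < l ^ 2 - 2 := by nlinarith
  set y : ℝ := l / (l ^ 2 - 2) with hy_def
  have hy0 : 0 < y := div_pos hl0 hden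
  have hK2 : y * l ^ 2 = l + 2 * y := by
    rw [hy_def]
    field_simp
    ring
  have hK1 : l ^ 2 = 2 * l + 2 * y := by
    rw [hy_def]
    field_simp
    linear_combination hroot
  have hy04 : (0.4:ℝ) ≤ y := by
    rw [hy_def, le_div_iff₀ hden]
    nlinarith [mul_nonneg (by linarith : (0:ℝ) ≤ 2.6 - l) (by linarith : (0:ℝ) ≤ l - 2)]
  have hy13 : y ≤ 1.3 := by
    rw [hy_def, div_le_iff₀ hden]
    nlinarith
  have bounds := NN_bounds l y hl2 hl26 hy04 hy13 hK1 hK2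
  -- exponent facts
  have hgold : (1 + Real.sqrt 5) / 2 = Real.goldenRatio := rfl
  have hφ1 : (1:ℝ) < Real.goldenRatio := Real.one_lt_goldenRatio
  have hφ0 : (0:ℝ) < Real.goldenRatio := Real.goldenRatio_pos
  have hlogφ : 0 < Real.log Real.goldenRatio := Real.log_pos hφ1
  set E : ℝ := Real.log l / Real.log ((1 + Real.sqrt 5) / 2) with hE_def
  have hE_def' : E = Real.log l / Real.log Real.goldenRatio := by rw [hE_def, hgold]
  have hE0 : 0 ≤ E := by
    rw [hE_def']
    apply div_nonneg _ hlogφ.le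
    exact Real.log_nonneg (by linarith)
  have hE2 : E ≤ 2 := by
    rw [hE_def', div_le_iff₀ hlogφ]
    have hgoldsq : l ≤ Real.goldenRatio ^ 2 := by
      rw [Real.goldenRatio_sq]
      have h5 : (2.2:ℝ) ≤ Real.sqrt 5 := by
        nlinarith [Real.sq_sqrt (by norm_num : (0:ℝ) ≤ 5),
          Real.sqrt_nonneg 5]
      rw [Real.goldenRatio]
      nlinarith
    calc Real.log l ≤ Real.log (Real.goldenRatio ^ 2) := Real.log_le_log hl0 hgoldsq
      _ = 2 * Real.log Real.goldenRatio := by rw [Real.log_pow]; norm_num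
  have hkey : ∀ k : ℕ, (Real.goldenRatio ^ k : ℝ) ^ E = l ^ k := by
    intro k
    have hel : E * Real.log Real.goldenRatio = Real.log l := by
      rw [hE_def']
      field_simp
    calc (Real.goldenRatio ^ k : ℝ) ^ E = (Real.goldenRatio ^ ((k : ℝ)) : ℝ) ^ E := by
          rw [Real.rpow_natCast]
      _ = Real.goldenRatio ^ ((k : ℝ) * E) := by rw [← Real.rpow_mul hφ0.le]
      _ = Real.exp (((k : ℝ) * E) * Real.log Real.goldenRatio) := by
          rw [Real.rpow_def_of_pos hφ0]
          ring_nf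
      _ = Real.exp ((k : ℝ) * Real.log l) := by rw [mul_assoc, hel]
      _ = Real.exp (Real.log l) ^ k := Real.exp_nat_mul _ k
      _ = l ^ k := by rw [Real.exp_log hl0]
  refine ⟨1/400, 10 * l + 1, by norm_num, by nlinarith, ?_⟩
  intro H hH
  obtain ⟨k, hk1, hk2⟩ := exists_k hH
  have hHpos : (0:ℝ) ≤ (H:ℝ) := Nat.cast_nonneg H
  have hfibk : Real.goldenRatio ^ k ≤ (H:ℝ) :=
    le_trans (gold_pow_le_fib k) (by exact_mod_cast hk1)
  have hfibk2 : (H:ℝ) ≤ Real.goldenRatio ^ (k + 2) := by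
    have h1 : (H:ℝ) ≤ (Nat.fib (k + 3) : ℝ) := by exact_mod_cast le_of_lt hk2
    have h2 := fib_le_gold_pow (k + 1)
    have e1 : Nat.fib (k + 1 + 2) = Nat.fib (k + 3) := congrArg Nat.fib (by omega)
    have e2 : Real.goldenRatio ^ (k + 1 + 1) = Real.goldenRatio ^ (k + 2) := by ring
    rw [e1, e2] at h2
    linarith
  have hHe_low : l ^ k ≤ (H:ℝ) ^ E :=
    calc l ^ k = (Real.goldenRatio ^ k : ℝ) ^ E := (hkey k).symm
      _ ≤ (H:ℝ) ^ E := Real.rpow_le_rpow (by positivity) hfibk hE0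
  have hHe_up : (H:ℝ) ^ E ≤ l ^ (k + 2) :=
    calc (H:ℝ) ^ E ≤ (Real.goldenRatio ^ (k + 2) : ℝ) ^ E :=
          Real.rpow_le_rpow hHpos hfibk2 hE0
      _ = l ^ (k + 2) := hkey (k + 2)
  have hE_nn : (0:ℝ) ≤ (H:ℝ) ^ E := Real.rpow_nonneg hHpos E
  constructor
  · -- lower bound
    rcases Nat.lt_or_ge k 2 with hklt | hkge
    · -- small case : H ≤ 2
      have hH2 : H ≤ 2 := by
        have hm : Nat.fib (k + 3) ≤ Nat.fib 4 := Nat.fib_mono (by omega)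
        have h4 : Nat.fib 4 = 3 := by decide
        omega
      have h2E : (H:ℝ) ^ E ≤ 4 := by
        have c1 : (H:ℝ) ^ E ≤ (2:ℝ) ^ E :=
          Real.rpow_le_rpow hHpos (by exact_mod_cast hH2) hE0
        have c2 : (2:ℝ) ^ E ≤ (2:ℝ) ^ (2:ℝ) :=
          Real.rpow_le_rpow_of_exponent_le (by norm_num) hE2
        have c3 : (2:ℝ) ^ (2:ℝ) = 4 := by
          rw [show (2:ℝ) = ((2:ℕ):ℝ) by norm_num, Real.rpow_natCast]
          norm_num
        linarith
      have hV1 : (1:ℝ) ≤ (V H : ℝ) := by exact_mod_cast one_le_V H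
      nlinarith
    · -- k ≥ 2
      obtain ⟨j, rfl⟩ : ∃ j, k = j + 2 := ⟨k - 2, by omega⟩
      have hNNlow := (bounds (j + 1) (by omega)).1.1
      have hVN : (NN (j + 1) 0 : ℝ) ≤ (V H : ℝ) := by
        have h1 := NN_le_V (j + 1)
        have h2 : V (Nat.fib (j + 1 + 3) - 2) ≤ V H := by
          apply V_mono
          have e1 : Nat.fib (j + 1 + 3) = Nat.fib (j + 2 + 2) :=
            congrArg Nat.fib (by omega)
          omega
        exact_mod_cast le_trans h1 h2
      have hlsq : l ^ 2 ≤ 6.76 := by nlinarith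
      have hl3 : l ^ 3 ≤ 20 := by nlinarith
      have hsplit : l ^ (j + 2 + 2) = l ^ (j + 1) * l ^ 3 := by ring
      have hp : (0:ℝ) < l ^ (j + 1) := pow_pos hl0 _
      calc (1/400 : ℝ) * (H:ℝ) ^ E ≤ (1/400) * l ^ (j + 2 + 2) := by nlinarith
        _ ≤ (1/20) * l ^ (j + 1) := by rw [hsplit]; nlinarith
        _ ≤ (NN (j + 1) 0 : ℝ) := hNNlow
        _ ≤ (V H : ℝ) := hVN
  · -- upper bound
    have hNVup := (bounds (k + 1) (by omega)).1.2
    have hVN : (V H : ℝ) ≤ (NN (k + 1) 0 : ℝ) := by exact_mod_cast V_le_NN hk2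
    calc (V H : ℝ) ≤ (NN (k + 1) 0 : ℝ) := hVN
      _ ≤ 10 * l ^ (k + 1) := hNVup
      _ = 10 * l * l ^ k := by ring
      _ ≤ 10 * l * (H:ℝ) ^ E := by nlinarith
      _ ≤ (10 * l + 1) * (H:ℝ) ^ E := by nlinarith
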